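/- For t > 0 let H_t be the guided Schrödinger operator on ℓ²(ℤ²) with single-strip potential of depth t, i.e., the bounded linear operator satisfying (H_t f)(m) = 4 f(m₁,m₂) − f(m₁+1,m₂) − f(m₁−1,m₂) − f(m₁,m₂+1) − f(m₁,m₂−1) − t·(if m₂ = 0 then f(m₁,m₂) else 0) for all m = (m₁,m₂) ∈ ℤ². Then the entire guided band [2 − √(4 + t²), 6 − √(4 + t²)] is contained in the real spectrum of H_t: for every x ∈ [2 − √(4+t²), 6 − √(4+t²)] one has (x : ℂ) ∈ spectrum ℂ H_t. -/

import Mathlib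

/-! Auxiliary definitions: truncated plane wave `ssgA`, truncated 1-D bound state `ssgB`,
and the corresponding "defect" functions `ssgAA`, `ssgBB`. -/

noncomputable def ssgA (z : ℂ) (N : ℕ) (n : ℤ) : ℂ := if n.natAbs ≤ N then z ^ n else 0
noncomputable def ssgB (r : ℝ) (M : ℕ) (n : ℤ) : ℝ := if n.natAbs ≤ M then r ^ n.natAbs else 0

lemma ssgA_norm_le (z : ℂ) (hz : ‖z‖ = 1) (N : ℕ) (n : ℤ) : ‖ssgA z N n‖ ≤ 1 := by
  unfold ssgA
  split
  · rw [norm_zpow, hz, one_zpow]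
  · simp

lemma ssgA_val (z : ℂ) (N : ℕ) (n : ℤ) (h : n.natAbs ≤ N) : ssgA z N n = z ^ n := by
  unfold ssgA; rw [if_pos h]

lemma ssgA_val0 (z : ℂ) (N : ℕ) (n : ℤ) (h : N < n.natAbs) : ssgA z N n = 0 := by
  unfold ssgA; rw [if_neg (by omega)]

noncomputable def ssgAA (z : ℂ) (ν : ℝ) (N : ℕ) (n : ℤ) : ℂ :=
  2 * ssgA z N n - ssgA z N (n+1) - ssgA z N (n-1) - (ν:ℂ) * ssgA z N n

lemma ssgAA_support (z : ℂ) (hz : z ≠ 0) (ν : ℝ) (hν : (2:ℂ) - z - z⁻¹ = (ν:ℂ))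
    (N : ℕ) (n : ℤ) (h : ssgAA z ν N n ≠ 0) :
    n ∈ ({-(N:ℤ)-1, -(N:ℤ), (N:ℤ), (N:ℤ)+1} : Finset ℤ) := by
  by_contra hn
  apply h
  unfold ssgAA ssgA
  rcases lt_or_ge n.natAbs N with hint | hext
  · have h1 : (n+1).natAbs ≤ N := by omega
    have h2 : (n-1).natAbs ≤ N := by omega
    rw [if_pos (le_of_lt hint), if_pos h1, if_pos h2]
    rw [zpow_add₀ hz, zpow_sub₀ hz, zpow_one]
    have : (2:ℂ) * z^n - z^n*z - z^n/z - ν * z^n = z^n * ((2 - z - z⁻¹) - ν) := by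
      rw [div_eq_mul_inv]; ring
    rw [this, hν]
    simp
  · have hN2 : N + 2 ≤ n.natAbs := by
      simp only [Finset.mem_insert, Finset.mem_singleton] at hn
      omega
    have h0 : ¬ n.natAbs ≤ N := by omega
    have h1 : ¬ (n+1).natAbs ≤ N := by omega
    have h2 : ¬ (n-1).natAbs ≤ N := by omega
    rw [if_neg h0, if_neg h1, if_neg h2]
    ring

lemma ssgAA_norm_le (z : ℂ) (hz : ‖z‖ = 1) (ν : ℝ) (hν0 : 0 ≤ ν) (hν4 : ν ≤ 4)
    (N : ℕ) (n : ℤ) : ‖ssgAA z ν N n‖ ≤ 8 := by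
  unfold ssgAA
  have h1 := ssgA_norm_le z hz N n
  have h2 := ssgA_norm_le z hz N (n+1)
  have h3 := ssgA_norm_le z hz N (n-1)
  calc ‖2 * ssgA z N n - ssgA z N (n+1) - ssgA z N (n-1) - (ν:ℂ) * ssgA z N n‖
      ≤ ‖2 * ssgA z N n - ssgA z N (n+1) - ssgA z N (n-1)‖ + ‖(ν:ℂ) * ssgA z N n‖ :=
        norm_sub_le _ _
    _ ≤ (‖2 * ssgA z N n - ssgA z N (n+1)‖ + ‖ssgA z N (n-1)‖) + ‖(ν:ℂ)‖ * ‖ssgA z N n‖ := by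
        rw [norm_mul]; gcongr; exact norm_sub_le _ _
    _ ≤ ((‖(2:ℂ)‖ * ‖ssgA z N n‖ + ‖ssgA z N (n+1)‖) + ‖ssgA z N (n-1)‖) + ‖(ν:ℂ)‖ * ‖ssgA z N n‖ := by
        gcongr
        calc ‖2 * ssgA z N n - ssgA z N (n+1)‖ ≤ ‖2 * ssgA z N n‖ + ‖ssgA z N (n+1)‖ := norm_sub_le _ _
        _ = ‖(2:ℂ)‖ * ‖ssgA z N n‖ + ‖ssgA z N (n+1)‖ := by rw [norm_mul]
    _ ≤ ((2 * 1 + 1) + 1) + 4 * 1 := by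
        have h2' : ‖(2:ℂ)‖ = 2 := by norm_num
        have hνn : ‖(ν:ℂ)‖ = ν := by rw [Complex.norm_real, Real.norm_of_nonneg hν0]
        rw [h2', hνn]
        gcongr
    _ = 8 := by norm_num

lemma ssgB_nonneg (r : ℝ) (hr : 0 < r) (M : ℕ) (n : ℤ) : 0 ≤ ssgB r M n := by
  unfold ssgB; split
  · positivity
  · exact le_refl 0

lemma ssgB_le_one (r : ℝ) (hr0 : 0 < r) (hr1 : r ≤ 1) (M : ℕ) (n : ℤ) : ssgB r M n ≤ 1 := by
  unfold ssgB; split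
  · exact pow_le_one₀ hr0.le hr1
  · norm_num

lemma ssgB_le_pow (r : ℝ) (hr0 : 0 < r) (hr1 : r ≤ 1) (M : ℕ) (n : ℤ) (h : M ≤ n.natAbs) :
    ssgB r M n ≤ r ^ M := by
  unfold ssgB; split
  · exact pow_le_pow_of_le_one hr0.le hr1 h
  · positivity

lemma ssgB_val (r : ℝ) (M : ℕ) (n : ℤ) (k : ℕ) (h : n.natAbs = k) (hk : k ≤ M) :
    ssgB r M n = r ^ k := by
  unfold ssgB; rw [h, if_pos hk]

lemma ssgB_val0 (r : ℝ) (M : ℕ) (n : ℤ) (h : M < n.natAbs) : ssgB r M n = 0 := by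
  unfold ssgB; rw [if_neg (by omega)]

noncomputable def ssgBB (r t μ : ℝ) (M : ℕ) (n : ℤ) : ℝ :=
  2 * ssgB r M n - ssgB r M (n+1) - ssgB r M (n-1)
    - (if n = 0 then t * ssgB r M n else 0) - μ * ssgB r M n

lemma ssgBB_support (r t μ : ℝ) (hrt : r^2 + t*r = 1) (hμ : μ = 2 - 2*r - t)
    (M : ℕ) (hM : 1 ≤ M) (n : ℤ) (h : ssgBB r t μ M n ≠ 0) :
    n ∈ ({-(M:ℤ)-1, -(M:ℤ), (M:ℤ), (M:ℤ)+1} : Finset ℤ) := by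
  by_contra hn
  apply h
  subst hμ
  unfold ssgBB
  rcases lt_or_ge n.natAbs M with hint | hext
  · rcases lt_trichotomy n 0 with hneg | h0 | hpos
    · obtain ⟨k, hk⟩ : ∃ k, n.natAbs = k + 1 := ⟨n.natAbs - 1, by omega⟩
      rw [ssgB_val r M n (k+1) hk (by omega), ssgB_val r M (n+1) k (by omega) (by omega),
        ssgB_val r M (n-1) (k+2) (by omega) (by omega), if_neg (by omega)]
      linear_combination (r^k) * hrt
    · subst h0
      rw [ssgB_val r M 0 0 rfl (by omega), ssgB_val r M (0+1) 1 (by omega) (by omega),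
        ssgB_val r M (0-1) 1 (by omega) (by omega), if_pos rfl]
      ring
    · obtain ⟨k, hk⟩ : ∃ k, n.natAbs = k + 1 := ⟨n.natAbs - 1, by omega⟩
      rw [ssgB_val r M n (k+1) hk (by omega), ssgB_val r M (n+1) (k+2) (by omega) (by omega),
        ssgB_val r M (n-1) k (by omega) (by omega), if_neg (by omega)]
      linear_combination (r^k) * hrt
  · have hM2 : M + 2 ≤ n.natAbs := by
      simp only [Finset.mem_insert, Finset.mem_singleton] at hn
      omega
    rw [ssgB_val0 r M n (by omega), ssgB_val0 r M (n+1) (by omega),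
      ssgB_val0 r M (n-1) (by omega), if_neg (by omega)]
    ring

lemma ssgBB_norm_le (r t μ : ℝ) (hr0 : 0 < r) (hr1 : r < 1) (hrt : r^2 + t*r = 1)
    (hμ : μ = 2 - 2*r - t) (M : ℕ) (hM : 1 ≤ M) (n : ℤ) :
    |ssgBB r t μ M n| ≤ r ^ M := by
  rcases eq_or_ne (ssgBB r t μ M n) 0 with h | h
  · rw [h, abs_zero]; positivity
  · have hs := ssgBB_support r t μ hrt hμ M hM n h
    simp only [Finset.mem_insert, Finset.mem_singleton] at hs
    subst hμ
    obtain ⟨k, hk⟩ : ∃ k, M = k + 1 := ⟨M - 1, by omega⟩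
    subst hk
    unfold ssgBB
    rcases hs with rfl | rfl | rfl | rfl
    · rw [ssgB_val0 r (k+1) _ (by omega), ssgB_val r (k+1) _ (k+1) (by omega) (by omega),
        ssgB_val0 r (k+1) _ (by omega), if_neg (by omega)]
      rw [show 2*0 - r^(k+1) - 0 - 0 - (2-2*r-t)*0 = -r^(k+1) by ring, abs_neg,
        abs_of_nonneg (by positivity)]
    · rw [ssgB_val r (k+1) _ (k+1) (by omega) (by omega),
        ssgB_val r (k+1) _ k (by omega) (by omega),
        ssgB_val0 r (k+1) _ (by omega), if_neg (by omega)]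
      have key : 2*r^(k+1) - r^k - 0 - 0 - (2-2*r-t)*r^(k+1) = r^(k+2) := by
        linear_combination (r^k) * hrt
      rw [key, abs_of_nonneg (by positivity)]
      exact pow_le_pow_of_le_one hr0.le hr1.le (by omega)
    · rw [ssgB_val r (k+1) _ (k+1) (by omega) (by omega),
        ssgB_val0 r (k+1) _ (by omega),
        ssgB_val r (k+1) _ k (by omega) (by omega), if_neg (by omega)]
      have key : 2*r^(k+1) - 0 - r^k - 0 - (2-2*r-t)*r^(k+1) = r^(k+2) := by
        linear_combination (r^k) * hrt
      rw [key, abs_of_nonneg (by positivity)]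
      exact pow_le_pow_of_le_one hr0.le hr1.le (by omega)
    · rw [ssgB_val0 r (k+1) _ (by omega), ssgB_val0 r (k+1) _ (by omega),
        ssgB_val r (k+1) _ (k+1) (by omega) (by omega), if_neg (by omega)]
      rw [show 2*0 - 0 - r^(k+1) - 0 - (2-2*r-t)*0 = -r^(k+1) by ring, abs_neg,
        abs_of_nonneg (by positivity)]

lemma ssg_z_facts (ν : ℝ) (h0 : 0 ≤ ν) (h4 : ν ≤ 4) :
    ∃ z : ℂ, ‖z‖ = 1 ∧ z ≠ 0 ∧ (2:ℂ) - z - z⁻¹ = (ν:ℂ) := by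
  set θ := Real.arccos (1 - ν/2) with hθ
  refine ⟨Complex.exp (θ * Complex.I), ?_, ?_, ?_⟩
  · rw [Complex.norm_exp_ofReal_mul_I]
  · exact Complex.exp_ne_zero _
  · rw [← Complex.exp_neg]
    have hcos : Real.cos θ = 1 - ν/2 := Real.cos_arccos (by linarith) (by linarith)
    have h1 : (Complex.exp (θ * Complex.I) + Complex.exp (-(θ * Complex.I))) = 2 * Complex.cos θ := by
      rw [Complex.cos]
      ring_nf
    have h2 : Complex.exp (θ * Complex.I) + Complex.exp (-(θ * Complex.I)) = ((2 * Real.cos θ : ℝ) : ℂ) := by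
      rw [h1]
      push_cast [Complex.ofReal_cos]
      ring
    have h3 : (2:ℂ) - Complex.exp (θ * Complex.I) - Complex.exp (-(θ * Complex.I))
        = 2 - ((2 * Real.cos θ : ℝ) : ℂ) := by rw [← h2]; ring
    rw [h3, hcos]
    push_cast
    ring

lemma ssg_r_facts (t : ℝ) (ht : 0 < t) :
    ∃ r : ℝ, 0 < r ∧ r < 1 ∧ r^2 + t*r = 1 ∧ 2 - Real.sqrt (4 + t^2) = 2 - 2*r - t := by
  have h4 : (0:ℝ) ≤ t^2+4 := by positivity
  have hs := Real.sq_sqrt h4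
  have hsnn := Real.sqrt_nonneg (t^2+4)
  set s := Real.sqrt (t^2+4) with hsdef
  have hst : t < s := by nlinarith
  have hs2 : s < t + 2 := by nlinarith
  refine ⟨(s - t)/2, by linarith, by linarith, by nlinarith, ?_⟩
  rw [show (4 + t^2) = t^2 + 4 by ring, ← hsdef]
  ring

lemma ssg_memlp (z : ℂ) (r : ℝ) (N M : ℕ) :
    Memℓp (fun m : ℤ×ℤ => ssgA z N m.1 * ((ssgB r M m.2 : ℝ) : ℂ)) 2 := by
  apply memℓp_gen
  apply summable_of_ne_finset_zero (s := (Finset.Icc (-(N:ℤ)) N) ×ˢ (Finset.Icc (-(M:ℤ)) M))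
  intro m hm
  have : ssgA z N m.1 * ((ssgB r M m.2 : ℝ) : ℂ) = 0 := by
    simp only [Finset.mem_product, Finset.mem_Icc, not_and_or, not_and, not_le] at hm
    rcases hm with h | h
    · rw [ssgA_val0 z N m.1 (by omega), zero_mul]
    · rw [ssgB_val0 r M m.2 (by omega), Complex.ofReal_zero, mul_zero]
  rw [this]
  have h2 : (2:ENNReal).toReal ≠ 0 := by norm_num
  simp [Real.zero_rpow h2]

lemma ssg_sum_union_le (A B : Finset (ℤ×ℤ)) (f : ℤ×ℤ → ℝ) (hf : ∀ x, 0 ≤ f x) :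
    ∑ x ∈ A ∪ B, f x ≤ ∑ x ∈ A, f x + ∑ x ∈ B, f x := by
  have h := Finset.sum_union_inter (s₁ := A) (s₂ := B) (f := f)
  have h2 : (0:ℝ) ≤ ∑ x ∈ A ∩ B, f x := Finset.sum_nonneg (fun x _ => hf x)
  linarith

lemma ssg_card_quad (a b c d : ℤ) : ({a, b, c, d} : Finset ℤ).card ≤ 4 :=
  (Finset.card_insert_le _ _).trans (Nat.succ_le_succ
    ((Finset.card_insert_le _ _).trans (Nat.succ_le_succ
      ((Finset.card_insert_le _ _).trans (Nat.succ_le_succ (by simp))))))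

set_option maxHeartbeats 1600000 in
/-- For the single-strip guided potential of depth `t` on the square lattice, the whole
guided band `[2 - √(4 + t²), 6 - √(4 + t²)]` lies in the real spectrum of `H_t`. -/
theorem single_strip_guided_band
    (t : ℝ) (ht : 0 < t)
    (H : lp (fun _ : ℤ × ℤ => ℂ) 2 →L[ℂ] lp (fun _ : ℤ × ℤ => ℂ) 2)
    (hH : ∀ (f : lp (fun _ : ℤ × ℤ => ℂ) 2) (m₁ m₂ : ℤ),
      H f (m₁, m₂) = 4 * f (m₁, m₂) - f (m₁ + 1, m₂) - f (m₁ - 1, m₂)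
        - f (m₁, m₂ + 1) - f (m₁, m₂ - 1)
        - (t : ℂ) * (if m₂ = 0 then f (m₁, m₂) else 0)) :
    ∀ x ∈ Set.Icc (2 - Real.sqrt (4 + t ^ 2)) (6 - Real.sqrt (4 + t ^ 2)),
      (x : ℂ) ∈ spectrum ℂ H := by
  intro x hx
  obtain ⟨r, hr0, hr1, hrt, hμeq⟩ := ssg_r_facts t ht
  set μ : ℝ := 2 - Real.sqrt (4 + t ^ 2) with hμdef
  set ν : ℝ := x - μ with hνdef
  have hν0 : 0 ≤ ν := by
    have := hx.1; simp only [hνdef, hμdef]; linarith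
  have hν4 : ν ≤ 4 := by
    have := hx.2; simp only [hνdef, hμdef]; linarith
  obtain ⟨z, hz1, hz0, hzν⟩ := ssg_z_facts ν hν0 hν4
  by_contra hspec
  rw [spectrum.notMem_iff] at hspec
  obtain ⟨u, hu⟩ := hspec
  set c : ℝ := ‖(↑u⁻¹ : lp (fun _ : ℤ × ℤ => ℂ) 2 →L[ℂ] lp (fun _ : ℤ × ℤ => ℂ) 2)‖ with hcdef
  have hc0 : 0 ≤ c := norm_nonneg _
  set D : ℝ := 324 * (c^2 + 1) with hDdef
  have hD0 : 0 < D := by positivity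
  -- choose M with r^M < 1/(4*D), M ≥ 1
  obtain ⟨M, hM1, hrM⟩ : ∃ M : ℕ, 1 ≤ M ∧ r ^ M < 1/(4*D) := by
    obtain ⟨M₀, hM₀⟩ := exists_pow_lt_of_lt_one (show (0:ℝ) < 1/(4*D) by positivity) hr1
    refine ⟨M₀ + 1, by omega, ?_⟩
    calc r ^ (M₀+1) ≤ r ^ M₀ := pow_le_pow_of_le_one hr0.le hr1.le (by omega)
    _ < 1/(4*D) := hM₀
  have hrM0 : 0 < r ^ M := pow_pos hr0 M
  have hrM1 : r ^ M ≤ 1 := pow_le_one₀ hr0.le hr1.le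
  -- choose N with D*(2*M+3) < N
  obtain ⟨N, hN⟩ := exists_nat_gt (D * (2*M+3))
  have hN1 : 1 ≤ N := by
    by_contra h
    have : N = 0 := by omega
    rw [this] at hN
    simp at hN
    nlinarith
  -- the test function
  set F : lp (fun _ : ℤ × ℤ => ℂ) 2 :=
    ⟨fun m : ℤ×ℤ => ssgA z N m.1 * ((ssgB r M m.2 : ℝ) : ℂ), ssg_memlp z r N M⟩ with hFdef
  have hFcoe : ∀ p : ℤ×ℤ, F p = ssgA z N p.1 * ((ssgB r M p.2 : ℝ) : ℂ) := fun p => rfl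
  -- lower bound on ‖F‖²
  have hsF : HasSum (fun m : ℤ×ℤ => ‖F m‖ ^ 2) (‖F‖ ^ 2) := by
    have := lp.hasSum_norm (p := 2) (by norm_num) F
    simpa [Real.rpow_two] using this
  have hFlow : (2*(N:ℝ)+1) ≤ ‖F‖ ^ 2 := by
    have hsum : ∑ m ∈ (Finset.Icc (-(N:ℤ)) N ×ˢ ({0} : Finset ℤ)), ‖F m‖ ^ 2 ≤ ‖F‖ ^ 2 :=
      sum_le_hasSum _ (fun _ _ => by positivity) hsF
    have heval : ∑ m ∈ (Finset.Icc (-(N:ℤ)) N ×ˢ ({0} : Finset ℤ)), ‖F m‖ ^ 2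
        = (2*(N:ℝ)+1) := by
      rw [Finset.sum_congr rfl (g := fun _ => (1:ℝ))]
      · rw [Finset.sum_const, Finset.card_product, Finset.card_singleton, Int.card_Icc]
        have : ((N:ℤ) + 1 - -(N:ℤ)).toNat = 2*N+1 := by omega
        rw [this]
        push_cast
        ring
      · intro m hm
        simp only [Finset.mem_product, Finset.mem_Icc, Finset.mem_singleton] at hm
        rw [hFcoe m, ssgA_val z N m.1 (by omega), hm.2,
          ssgB_val r M 0 0 rfl (by omega), pow_zero, Complex.ofReal_one, mul_one,
          norm_zpow, hz1, one_zpow]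
        norm_num
    linarith [heval ▸ hsum]
  -- the defect G = (x - H) F
  set G : lp (fun _ : ℤ × ℤ => ℂ) 2 :=
    (algebraMap ℂ (lp (fun _ : ℤ × ℤ => ℂ) 2 →L[ℂ] lp (fun _ : ℤ × ℤ => ℂ) 2) (x:ℂ) - H) F
    with hGdef
  have hFG : ‖F‖ ≤ c * ‖G‖ := by
    have h : F = (↑u⁻¹ : lp (fun _ : ℤ × ℤ => ℂ) 2 →L[ℂ] _) G := by
      rw [hGdef, ← hu, ← ContinuousLinearMap.mul_apply, Units.inv_mul,
        ContinuousLinearMap.one_apply]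
    conv_lhs => rw [h]
    rw [hcdef]
    exact ContinuousLinearMap.le_opNorm _ _
  -- pointwise formula for G
  have hGapp : ∀ p : ℤ×ℤ, G p = (x:ℂ) * F p - (H F) p := by
    intro p
    rw [hGdef, ContinuousLinearMap.sub_apply, lp.coeFn_sub, Pi.sub_apply,
      Algebra.algebraMap_eq_smul_one, ContinuousLinearMap.smul_apply,
      ContinuousLinearMap.one_apply, lp.coeFn_smul, Pi.smul_apply, smul_eq_mul]
  have hGm : ∀ p : ℤ×ℤ,
      G p = -(ssgAA z ν N p.1 * ((ssgB r M p.2 : ℝ) : ℂ)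
        + ssgA z N p.1 * ((ssgBB r t μ M p.2 : ℝ) : ℂ)) := by
    rintro ⟨m₁, m₂⟩
    rw [hGapp ⟨m₁, m₂⟩, hH F m₁ m₂]
    have e0 : F (m₁, m₂) = ssgA z N m₁ * ((ssgB r M m₂ : ℝ) : ℂ) := hFcoe _
    have e1 : F (m₁+1, m₂) = ssgA z N (m₁+1) * ((ssgB r M m₂ : ℝ) : ℂ) := hFcoe _
    have e2 : F (m₁-1, m₂) = ssgA z N (m₁-1) * ((ssgB r M m₂ : ℝ) : ℂ) := hFcoe _
    have e3 : F (m₁, m₂+1) = ssgA z N m₁ * ((ssgB r M (m₂+1) : ℝ) : ℂ) := hFcoe _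
    have e4 : F (m₁, m₂-1) = ssgA z N m₁ * ((ssgB r M (m₂-1) : ℝ) : ℂ) := hFcoe _
    rw [e0, e1, e2, e3, e4]
    have hxc : (x:ℂ) = ((μ:ℝ):ℂ) + ((ν:ℝ):ℂ) := by
      rw [hνdef]; push_cast; ring
    rw [hxc]
    unfold ssgAA ssgBB
    split_ifs with h
    · push_cast; ring
    · push_cast; ring
  -- upper bound for ‖G‖²
  have hsG : HasSum (fun m : ℤ×ℤ => ‖G m‖ ^ 2) (‖G‖ ^ 2) := by
    have := lp.hasSum_norm (p := 2) (by norm_num) G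
    simpa [Real.rpow_two] using this
  clear_value F G
  clear_value c D μ ν
  clear hFdef hGdef
  set S₁ : Finset ℤ := {-(N:ℤ)-1, -(N:ℤ), (N:ℤ), (N:ℤ)+1} with hS₁def
  set S₂ : Finset ℤ := {-(M:ℤ)-1, -(M:ℤ), (M:ℤ), (M:ℤ)+1} with hS₂def
  set SA : Finset (ℤ×ℤ) := S₁ ×ˢ Finset.Icc (-(M:ℤ)-1) ((M:ℤ)+1) with hSAdef
  set SB : Finset (ℤ×ℤ) := Finset.Icc (-(N:ℤ)-1) ((N:ℤ)+1) ×ˢ S₂ with hSBdef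
  clear_value S₁ S₂ SA SB
  have hvanish : ∀ m : ℤ×ℤ, m ∉ SA ∪ SB → ‖G m‖ ^ 2 = 0 := by
    intro m hm
    rw [Finset.mem_union, not_or] at hm
    obtain ⟨hmA, hmB⟩ := hm
    rw [hSAdef, Finset.mem_product, not_and_or] at hmA
    rw [hSBdef, Finset.mem_product, not_and_or] at hmB
    have hA : ssgAA z ν N m.1 * ((ssgB r M m.2 : ℝ) : ℂ) = 0 := by
      rcases eq_or_ne (ssgAA z ν N m.1) 0 with h | h
      · rw [h, zero_mul]
      · have hm1 : m.1 ∈ S₁ := by rw [hS₁def]; exact ssgAA_support z hz0 ν hzν N m.1 h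
        rcases hmA with h' | h'
        · exact absurd hm1 h'
        · rw [Finset.mem_Icc, not_and_or, not_le, not_le] at h'
          rw [ssgB_val0 r M m.2 (by omega), Complex.ofReal_zero, mul_zero]
    have hB : ssgA z N m.1 * ((ssgBB r t μ M m.2 : ℝ) : ℂ) = 0 := by
      rcases eq_or_ne (ssgBB r t μ M m.2) 0 with h | h
      · rw [h, Complex.ofReal_zero, mul_zero]
      · have hm2 : m.2 ∈ S₂ := by rw [hS₂def]; exact ssgBB_support r t μ hrt hμeq M hM1 m.2 h
        rcases hmB with h' | h'
        · rw [Finset.mem_Icc, not_and_or, not_le, not_le] at h'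
          have : N + 1 < m.1.natAbs := by omega
          rw [ssgA_val0 z N m.1 (by omega), zero_mul]
        · exact absurd hm2 h'
    rw [hGm m, hA, hB]
    simp
  have hGsum : ‖G‖ ^ 2 = ∑ m ∈ SA ∪ SB, ‖G m‖ ^ 2 := by
    have h2 : HasSum (fun m : ℤ×ℤ => ‖G m‖ ^ 2) (∑ m ∈ SA ∪ SB, ‖G m‖ ^ 2) :=
      hasSum_sum_of_ne_finset_zero hvanish
    exact hsG.unique h2
  -- per-point bounds
  have hbnd1 : ∀ m ∈ SA, ‖G m‖ ^ 2 ≤ 81 := by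
    intro m _
    have h1 : ‖G m‖ ≤ 9 := by
      rw [hGm m, norm_neg]
      calc ‖ssgAA z ν N m.1 * ((ssgB r M m.2 : ℝ) : ℂ)
            + ssgA z N m.1 * ((ssgBB r t μ M m.2 : ℝ) : ℂ)‖
          ≤ ‖ssgAA z ν N m.1‖ * ‖((ssgB r M m.2 : ℝ) : ℂ)‖
            + ‖ssgA z N m.1‖ * ‖((ssgBB r t μ M m.2 : ℝ) : ℂ)‖ := by
            refine (norm_add_le _ _).trans ?_
            rw [norm_mul, norm_mul]
        _ ≤ 8 * 1 + 1 * 1 := by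
            apply add_le_add
            · apply mul_le_mul (ssgAA_norm_le z hz1 ν hν0 hν4 N m.1) ?_ (norm_nonneg _)
                (by norm_num)
              rw [Complex.norm_real, Real.norm_of_nonneg (ssgB_nonneg r hr0 M m.2)]
              exact ssgB_le_one r hr0 hr1.le M m.2
            · apply mul_le_mul (ssgA_norm_le z hz1 N m.1) ?_ (norm_nonneg _) (by norm_num)
              rw [Complex.norm_real, Real.norm_eq_abs]
              exact (ssgBB_norm_le r t μ hr0 hr1 hrt hμeq M hM1 m.2).trans hrM1
        _ ≤ 9 := by norm_num
    calc ‖G m‖ ^ 2 ≤ 9 ^ 2 := pow_le_pow_left₀ (norm_nonneg _) h1 2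
    _ = 81 := by norm_num
  have hbnd2 : ∀ m ∈ SB, ‖G m‖ ^ 2 ≤ 81 * (r^M)^2 := by
    intro m hm
    rw [hSBdef, Finset.mem_product] at hm
    have hm2 : M ≤ m.2.natAbs := by
      have := hm.2
      rw [hS₂def] at this
      simp only [Finset.mem_insert, Finset.mem_singleton] at this
      omega
    have h1 : ‖G m‖ ≤ 9 * r^M := by
      rw [hGm m, norm_neg]
      calc ‖ssgAA z ν N m.1 * ((ssgB r M m.2 : ℝ) : ℂ)
            + ssgA z N m.1 * ((ssgBB r t μ M m.2 : ℝ) : ℂ)‖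
          ≤ ‖ssgAA z ν N m.1‖ * ‖((ssgB r M m.2 : ℝ) : ℂ)‖
            + ‖ssgA z N m.1‖ * ‖((ssgBB r t μ M m.2 : ℝ) : ℂ)‖ := by
            refine (norm_add_le _ _).trans ?_
            rw [norm_mul, norm_mul]
        _ ≤ 8 * r^M + 1 * r^M := by
            apply add_le_add
            · apply mul_le_mul (ssgAA_norm_le z hz1 ν hν0 hν4 N m.1) ?_ (norm_nonneg _)
                (by norm_num)
              rw [Complex.norm_real, Real.norm_of_nonneg (ssgB_nonneg r hr0 M m.2)]
              exact ssgB_le_pow r hr0 hr1.le M m.2 hm2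
            · apply mul_le_mul (ssgA_norm_le z hz1 N m.1) ?_ (norm_nonneg _) (by norm_num)
              rw [Complex.norm_real, Real.norm_eq_abs]
              exact ssgBB_norm_le r t μ hr0 hr1 hrt hμeq M hM1 m.2
        _ = 9 * r^M := by ring
    calc ‖G m‖ ^ 2 ≤ (9 * r^M) ^ 2 := pow_le_pow_left₀ (norm_nonneg _) h1 2
    _ = 81 * (r^M)^2 := by ring
  -- cardinalities
  have hcardSA : (SA.card : ℝ) ≤ 4 * (2*(M:ℝ)+3) := by
    have h2 : (Finset.Icc (-(M:ℤ)-1) ((M:ℤ)+1)).card = 2*M+3 := by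
      rw [Int.card_Icc]; omega
    have h3 : SA.card ≤ 4 * (2*M+3) := by
      have h1 : S₁.card ≤ 4 := by rw [hS₁def]; exact ssg_card_quad _ _ _ _
      rw [hSAdef, Finset.card_product, h2]
      exact Nat.mul_le_mul h1 le_rfl
    calc (SA.card : ℝ) ≤ ((4 * (2*M+3) : ℕ) : ℝ) := by exact_mod_cast h3
    _ = 4 * (2*(M:ℝ)+3) := by push_cast; ring
  have hcardSB : (SB.card : ℝ) ≤ 4 * (2*(N:ℝ)+3) := by
    have h2 : (Finset.Icc (-(N:ℤ)-1) ((N:ℤ)+1)).card = 2*N+3 := by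
      rw [Int.card_Icc]; omega
    have h3 : SB.card ≤ (2*N+3) * 4 := by
      have h1 : S₂.card ≤ 4 := by rw [hS₂def]; exact ssg_card_quad _ _ _ _
      rw [hSBdef, Finset.card_product, h2]
      exact Nat.mul_le_mul le_rfl h1
    calc (SB.card : ℝ) ≤ (((2*N+3) * 4 : ℕ) : ℝ) := by exact_mod_cast h3
    _ = 4 * (2*(N:ℝ)+3) := by push_cast; ring
  -- total bound for ‖G‖²
  have hGup : ‖G‖ ^ 2 ≤ 324 * (2*(M:ℝ)+3) + 324 * (2*(N:ℝ)+3) * (r^M)^2 := by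
    rw [hGsum]
    calc ∑ m ∈ SA ∪ SB, ‖G m‖ ^ 2
        ≤ ∑ m ∈ SA, ‖G m‖ ^ 2 + ∑ m ∈ SB, ‖G m‖ ^ 2 :=
          ssg_sum_union_le SA SB _ (fun m => by positivity)
      _ ≤ SA.card • (81:ℝ) + SB.card • (81 * (r^M)^2) := by
          gcongr
          · exact Finset.sum_le_card_nsmul SA _ _ hbnd1
          · exact Finset.sum_le_card_nsmul SB _ _ hbnd2
      _ = (SA.card : ℝ) * 81 + (SB.card : ℝ) * (81 * (r^M)^2) := by
          rw [nsmul_eq_mul, nsmul_eq_mul]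
      _ ≤ (4 * (2*(M:ℝ)+3)) * 81 + (4 * (2*(N:ℝ)+3)) * (81 * (r^M)^2) :=
          add_le_add (mul_le_mul_of_nonneg_right hcardSA (by norm_num))
            (mul_le_mul_of_nonneg_right hcardSB (by positivity))
      _ = 324 * (2*(M:ℝ)+3) + 324 * (2*(N:ℝ)+3) * (r^M)^2 := by ring
  -- final contradiction
  have hFG2 : ‖F‖ ^ 2 ≤ c^2 * ‖G‖ ^ 2 := by
    calc ‖F‖ ^ 2 ≤ (c * ‖G‖) ^ 2 := pow_le_pow_left₀ (norm_nonneg _) hFG 2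
    _ = c^2 * ‖G‖ ^ 2 := by ring
  have hrMsq : (r^M)^2 ≤ r^M := by
    rw [pow_two]
    exact mul_le_of_le_one_left hrM0.le hrM1
  have hG0 : 0 ≤ ‖G‖ ^ 2 := by positivity
  have chain : (2*(N:ℝ)+1) ≤ (c^2+1) * (324 * (2*(M:ℝ)+3) + 324 * (2*(N:ℝ)+3) * (r^M)^2) := by
    have h1 : (2*(N:ℝ)+1) ≤ c^2 * ‖G‖^2 := le_trans hFlow hFG2
    have h2 : c^2 * ‖G‖^2 ≤ (c^2+1) * ‖G‖^2 := mul_le_mul_of_nonneg_right (by linarith) hG0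
    have h3 : (c^2+1) * ‖G‖^2 ≤ (c^2+1) * (324 * (2*(M:ℝ)+3) + 324 * (2*(N:ℝ)+3) * (r^M)^2) := by
      apply mul_le_mul_of_nonneg_left hGup (by positivity)
    linarith
  -- but the RHS is < 2N+1
  have hterm1 : (c^2+1) * (324 * (2*(M:ℝ)+3)) < (N:ℝ) := by
    calc (c^2+1) * (324 * (2*(M:ℝ)+3)) = D * (2*(M:ℝ)+3) := by rw [hDdef]; ring
    _ < N := hN
  have hterm2 : (c^2+1) * (324 * (2*(N:ℝ)+3) * (r^M)^2) ≤ (2*(N:ℝ)+3)/4 := by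
    have hr4 : (r^M)^2 < 1/(4*D) := lt_of_le_of_lt hrMsq hrM
    calc (c^2+1) * (324 * (2*(N:ℝ)+3) * (r^M)^2)
        = D * (2*(N:ℝ)+3) * (r^M)^2 := by rw [hDdef]; ring
      _ ≤ D * (2*(N:ℝ)+3) * (1/(4*D)) := by
          apply mul_le_mul_of_nonneg_left hr4.le
          positivity
      _ = (2*(N:ℝ)+3)/4 := by
          have hq : D * (2*(N:ℝ)+3) * (1/(4*D)) = (2*(N:ℝ)+3)/4 * (D / D) := by ring
          rw [hq, div_self hD0.ne', mul_one]
  have hN1' : (1:ℝ) ≤ N := by exact_mod_cast hN1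
  have hsplit : (c^2+1) * (324 * (2*(M:ℝ)+3) + 324 * (2*(N:ℝ)+3) * (r^M)^2)
      = (c^2+1) * (324 * (2*(M:ℝ)+3)) + (c^2+1) * (324 * (2*(N:ℝ)+3) * (r^M)^2) := by ring
  linarith [chain, hterm1, hterm2]
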